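/- Let A, B ⊆ ℝ be finite nonempty sets. Then E_{1.5}(A)² · |B|² ≤ E₃(A)^{2/3} · E₃(B)^{1/3} · E(A, A−B), where E_k(A) = Σ_x r_{A−A}(x)^k and E(A, F) = Σ_x r_{A−F}(x)². -/

import Mathlib

open Finset

/-- `r_{X−Y}(s)`: the number of pairs `(x,y) ∈ X×Y` with `x − y = s`. -/
noncomputable def rDiff (X Y : Finset ℝ) (s : ℝ) : ℕ :=
  ((X ×ˢ Y).filter (fun p => p.1 - p.2 = s)).card

/-- The difference set `X − Y` as a finset. -/
noncomputable def diffSet (X Y : Finset ℝ) : Finset ℝ :=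
  (X ×ˢ Y).image (fun p => p.1 - p.2)

/-- `E_k(A) = Σ_s r_{A−A}(s)^k` (real exponent). -/
noncomputable def energyK (A : Finset ℝ) (k : ℝ) : ℝ :=
  ∑ s ∈ diffSet A A, (rDiff A A s : ℝ) ^ k

/-- `E(A,F) = Σ_s r_{A−F}(s)²`. -/
noncomputable def energy2 (A F : Finset ℝ) : ℝ :=
  ∑ s ∈ diffSet A F, (rDiff A F s : ℝ) ^ 2

lemma rDiff_eq_card (X Y : Finset ℝ) (s : ℝ) :
    rDiff X Y s = (X.filter (fun a => a - s ∈ Y)).card := by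
  classical
  unfold rDiff
  apply Finset.card_nbij' (i := fun p => p.1) (j := fun a => (a, a - s))
  · rintro ⟨a, b⟩ hp
    simp only [Finset.mem_coe, Finset.mem_filter, Finset.mem_product] at hp ⊢
    refine ⟨hp.1.1, ?_⟩
    have : a - s = b := by have := hp.2; linarith
    rw [this]; exact hp.1.2
  · intro a ha
    simp only [Finset.mem_coe, Finset.mem_filter, Finset.mem_product] at ha ⊢
    exact ⟨⟨ha.1, ha.2⟩, by ring⟩
  · rintro ⟨a, b⟩ hp
    simp only [Finset.mem_coe, Finset.mem_filter, Finset.mem_product] at hp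
    have : a - s = b := by have := hp.2; linarith
    simp [this]
  · intro a ha; rfl

lemma mem_diffSet {X Y : Finset ℝ} {s : ℝ} :
    s ∈ diffSet X Y ↔ ∃ a ∈ X, ∃ b ∈ Y, a - b = s := by
  unfold diffSet
  simp [Finset.mem_image, Finset.mem_product]
  constructor
  · rintro ⟨a, b, ⟨ha, hb⟩, h⟩; exact ⟨a, ha, b, hb, h⟩
  · rintro ⟨a, ha, b, hb, h⟩; exact ⟨a, b, ⟨ha, hb⟩, h⟩

lemma rDiff_pos {X Y : Finset ℝ} {s : ℝ} (h : s ∈ diffSet X Y) : 0 < rDiff X Y s := by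
  classical
  obtain ⟨a, ha, b, hb, hd⟩ := mem_diffSet.1 h
  unfold rDiff
  refine Finset.card_pos.2 ⟨(a, b), ?_⟩
  simp [Finset.mem_filter, Finset.mem_product, ha, hb, hd]

lemma rDiff_eq_zero {X Y : Finset ℝ} {s : ℝ} (h : s ∉ diffSet X Y) : rDiff X Y s = 0 := by
  classical
  unfold rDiff
  rw [Finset.card_eq_zero, Finset.filter_eq_empty_iff]
  rintro ⟨a, b⟩ hp hd
  exact h (mem_diffSet.2 ⟨a, (Finset.mem_product.1 hp).1, b, (Finset.mem_product.1 hp).2, hd⟩)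

lemma sum_rDiff (X Y : Finset ℝ) :
    ∑ s ∈ diffSet X Y, rDiff X Y s = X.card * Y.card := by
  classical
  rw [← Finset.card_product]
  exact (Finset.card_eq_sum_card_fiberwise
    (fun p hp => Finset.mem_image_of_mem _ hp)).symm

/-- quadruples ((a,b),(a',b')) in (X×Y)² with a-b = a'-b' -/
noncomputable def quadSet (X Y : Finset ℝ) : Finset ((ℝ × ℝ) × (ℝ × ℝ)) :=
  ((X ×ˢ Y) ×ˢ (X ×ˢ Y)).filter (fun q => q.1.1 - q.1.2 = q.2.1 - q.2.2)

lemma sum_sq_rDiff_eq_card_quadSet (X Y : Finset ℝ) :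
    ∑ x ∈ diffSet X Y, (rDiff X Y x) ^ 2 = (quadSet X Y).card := by
  classical
  rw [Finset.card_eq_sum_card_fiberwise
    (f := fun q => q.1.1 - q.1.2) (t := diffSet X Y)
    (fun q hq => by
      simp only [Finset.mem_coe, quadSet, Finset.mem_filter, Finset.mem_product] at hq
      exact mem_image.2 ⟨q.1, Finset.mem_product.2 hq.1.1, rfl⟩)]
  refine Finset.sum_congr rfl (fun x hx => ?_)
  have : (quadSet X Y).filter (fun q => q.1.1 - q.1.2 = x) =
      ((X ×ˢ Y).filter (fun p => p.1 - p.2 = x)) ×ˢ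
        ((X ×ˢ Y).filter (fun p => p.1 - p.2 = x)) := by
    ext q
    simp only [quadSet, Finset.mem_filter, Finset.mem_product]
    constructor
    · rintro ⟨⟨⟨h1, h2⟩, he⟩, hx1⟩
      exact ⟨⟨h1, hx1⟩, ⟨h2, by rw [← he]; exact hx1⟩⟩
    · rintro ⟨⟨h1, hx1⟩, ⟨h2, hx2⟩⟩
      exact ⟨⟨⟨h1, h2⟩, by rw [hx1, hx2]⟩, hx1⟩
  rw [this, Finset.card_product]
  unfold rDiff
  ring

lemma card_quadSet_fiber (X Y : Finset ℝ) (t : ℝ) :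
    ((quadSet X Y).filter (fun q => q.1.1 - q.2.1 = t)).card
      = rDiff X X t * rDiff Y Y t := by
  classical
  unfold rDiff
  rw [← Finset.card_product]
  apply Finset.card_nbij'
    (i := fun q => ((q.1.1, q.2.1), (q.1.2, q.2.2)))
    (j := fun w => ((w.1.1, w.2.1), (w.1.2, w.2.2)))
  · rintro ⟨⟨a, b⟩, ⟨a', b'⟩⟩ hq
    simp only [Finset.mem_coe, quadSet, Finset.mem_filter, Finset.mem_product] at hq ⊢
    obtain ⟨⟨⟨⟨ha, hb⟩, ⟨ha', hb'⟩⟩, he⟩, ht⟩ := hq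
    exact ⟨⟨⟨ha, ha'⟩, ht⟩, ⟨⟨hb, hb'⟩, by linarith⟩⟩
  · rintro ⟨⟨a, a'⟩, ⟨b, b'⟩⟩ hw
    simp only [Finset.mem_coe, quadSet, Finset.mem_filter, Finset.mem_product] at hw ⊢
    obtain ⟨⟨⟨ha, ha'⟩, ht⟩, ⟨⟨hb, hb'⟩, ht'⟩⟩ := hw
    exact ⟨⟨⟨⟨ha, hb⟩, ⟨ha', hb'⟩⟩, by linarith⟩, ht⟩
  · rintro ⟨⟨a, b⟩, ⟨a', b'⟩⟩ _; rfl
  · rintro ⟨⟨a, a'⟩, ⟨b, b'⟩⟩ _; rfl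

lemma card_quadSet (X Y : Finset ℝ) :
    (quadSet X Y).card = ∑ t ∈ diffSet X X, rDiff X X t * rDiff Y Y t := by
  classical
  rw [Finset.card_eq_sum_card_fiberwise
    (f := fun q => q.1.1 - q.2.1) (t := diffSet X X)
    (fun q hq => by
      simp only [Finset.mem_coe, quadSet, Finset.mem_filter, Finset.mem_product] at hq
      exact mem_image.2 ⟨(q.1.1, q.2.1),
        Finset.mem_product.2 ⟨hq.1.1.1, hq.1.2.1⟩, rfl⟩)]
  exact Finset.sum_congr rfl (fun t _ => card_quadSet_fiber X Y t)

lemma quad_count (X Y : Finset ℝ) :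
    ∑ x ∈ diffSet X Y, (rDiff X Y x) ^ 2
      = ∑ t ∈ diffSet X X, rDiff X X t * rDiff Y Y t :=
  (sum_sq_rDiff_eq_card_quadSet X Y).trans (card_quadSet X Y)

/-- A_s = A ∩ (A + s) -/
noncomputable def sliceA (A : Finset ℝ) (s : ℝ) : Finset ℝ :=
  A.filter (fun a => a - s ∈ A)

lemma card_sliceA (A : Finset ℝ) (s : ℝ) : (sliceA A s).card = rDiff A A s :=
  (rDiff_eq_card A A s).symm

/-- number of s ∈ A−A with a₁ − s ∈ A and a₂ − s ∈ A equals r_{A−A}(a₁−a₂) -/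
lemma count_slices (A : Finset ℝ) {a₁ a₂ : ℝ} (h₁ : a₁ ∈ A) :
    ((diffSet A A).filter (fun s => a₁ - s ∈ A ∧ a₂ - s ∈ A)).card
      = rDiff A A (a₁ - a₂) := by
  classical
  rw [rDiff_eq_card]
  apply Finset.card_nbij' (i := fun s => a₁ - s) (j := fun p => a₁ - p)
  · intro s hs
    simp only [Finset.mem_coe, Finset.mem_filter] at hs ⊢
    refine ⟨hs.2.1, ?_⟩
    have : a₁ - s - (a₁ - a₂) = a₂ - s := by ring
    rw [this]; exact hs.2.2
  · intro p hp
    simp only [Finset.mem_coe, Finset.mem_filter] at hp ⊢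
    refine ⟨?_, by simpa using hp.1, ?_⟩
    · exact mem_image.2 ⟨(a₁, p), Finset.mem_product.2 ⟨h₁, hp.1⟩, rfl⟩
    · have : a₂ - (a₁ - p) = p - (a₁ - a₂) := by ring
      rw [this]; exact hp.2
  · intro s _; ring
  · intro p _; ring

/-- Key double count: Σ_s E(A_s, B) = Σ_t r_AA(t)² r_BB(t). -/
lemma sum_slice_energy (A B : Finset ℝ) :
    ∑ s ∈ diffSet A A, ∑ x ∈ diffSet (sliceA A s) B, (rDiff (sliceA A s) B x) ^ 2
      = ∑ t ∈ diffSet A A, (rDiff A A t) ^ 2 * rDiff B B t := by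
  classical
  -- rewrite inner sum as a card of a filter of quadSet A B
  have hstep : ∀ s : ℝ,
      ∑ x ∈ diffSet (sliceA A s) B, (rDiff (sliceA A s) B x) ^ 2
        = ((quadSet A B).filter
            (fun q => q.1.1 - s ∈ A ∧ q.2.1 - s ∈ A)).card := by
    intro s
    rw [sum_sq_rDiff_eq_card_quadSet]
    congr 1
    ext q
    simp only [quadSet, sliceA, Finset.mem_filter, Finset.mem_product]
    tauto
  simp only [hstep]
  -- double counting: swap order of summation
  have hswap :
      ∑ s ∈ diffSet A A,
        ((quadSet A B).filter (fun q => q.1.1 - s ∈ A ∧ q.2.1 - s ∈ A)).card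
      = ∑ q ∈ quadSet A B,
        ((diffSet A A).filter (fun s => q.1.1 - s ∈ A ∧ q.2.1 - s ∈ A)).card := by
    simp only [Finset.card_filter]
    rw [Finset.sum_comm]
  rw [hswap]
  -- evaluate inner count and regroup by t = q.1.1 - q.2.1
  have hcount : ∀ q ∈ quadSet A B,
      ((diffSet A A).filter (fun s => q.1.1 - s ∈ A ∧ q.2.1 - s ∈ A)).card
        = rDiff A A (q.1.1 - q.2.1) := by
    intro q hq
    simp only [quadSet, Finset.mem_filter, Finset.mem_product] at hq
    exact count_slices A hq.1.1.1
  rw [Finset.sum_congr rfl hcount]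
  -- fiberwise over t
  rw [← Finset.sum_fiberwise_of_maps_to
    (g := fun q => q.1.1 - q.2.1) (t := diffSet A A)
    (fun q hq => by
      simp only [quadSet, Finset.mem_filter, Finset.mem_product] at hq
      exact mem_image.2 ⟨(q.1.1, q.2.1),
        Finset.mem_product.2 ⟨hq.1.1.1, hq.1.2.1⟩, rfl⟩)]
  refine Finset.sum_congr rfl (fun t _ => ?_)
  have : ∀ q ∈ (quadSet A B).filter (fun q => q.1.1 - q.2.1 = t),
      rDiff A A (q.1.1 - q.2.1) = rDiff A A t := by
    intro q hq
    rw [(Finset.mem_filter.1 hq).2]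
  rw [Finset.sum_congr rfl this, Finset.sum_const, card_quadSet_fiber, smul_eq_mul]
  ring

/-- Lemma 1, Li: `E_{1.5}(A)²·|B|² ≤ E₃(A)^{2/3}·E₃(B)^{1/3}·E(A,A−B)`. -/
theorem stmt19 (A B : Finset ℝ) (hA : A.Nonempty) (hB : B.Nonempty) :
    (energyK A ((3 : ℝ) / 2)) ^ 2 * (B.card : ℝ) ^ 2 ≤
      (energyK A 3) ^ ((2 : ℝ) / 3) * (energyK B 3) ^ ((1 : ℝ) / 3) *
        energy2 A (diffSet A B) := by
  classical
  set S := diffSet A A with hS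
  set C := diffSet A B with hC
  set r : ℝ → ℝ := fun s => (rDiff A A s : ℝ) with hr
  set D : ℝ → ℝ := fun s => (rDiff C C s : ℝ) with hD
  set E : ℝ → ℝ :=
    fun s => ∑ x ∈ diffSet (sliceA A s) B, ((rDiff (sliceA A s) B x : ℝ)) ^ 2 with hE
  have hrnn : ∀ s, 0 ≤ r s := fun s => Nat.cast_nonneg _
  have hDnn : ∀ s, 0 ≤ D s := fun s => Nat.cast_nonneg _
  have hEnn : ∀ s, 0 ≤ E s := fun s => Finset.sum_nonneg fun x _ => sq_nonneg _
  -- Per-s estimate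
  have hper : ∀ s ∈ S, r s ^ ((3:ℝ)/2) * (B.card : ℝ)
      ≤ Real.sqrt (r s * D s) * Real.sqrt (E s) := by
    intro s hs
    have hr0 : (0:ℝ) < r s := by
      simp only [hr]; exact_mod_cast rDiff_pos hs
    -- r s * |B| as a sum
    have hsum : r s * (B.card : ℝ)
        = ∑ x ∈ diffSet (sliceA A s) B, ((rDiff (sliceA A s) B x : ℝ)) := by
      have hsumN := sum_rDiff (sliceA A s) B
      rw [card_sliceA] at hsumN
      simp only [hr]
      rw [← Nat.cast_sum, hsumN]
      push_cast
      ring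
    -- Katz–Koester: diffSet (sliceA A s) B ⊆ C ∩ (C + s)
    have hsub : diffSet (sliceA A s) B ⊆ C.filter (fun x => x - s ∈ C) := by
      intro x hx
      obtain ⟨a, ha, b, hb, hab⟩ := mem_diffSet.1 hx
      rw [sliceA, Finset.mem_filter] at ha
      refine Finset.mem_filter.2 ⟨mem_diffSet.2 ⟨a, ha.1, b, hb, hab⟩, ?_⟩
      exact mem_diffSet.2 ⟨a - s, ha.2, b, hb, by linarith⟩
    have hcard : ((diffSet (sliceA A s) B).card : ℝ) ≤ D s := by
      have h1 := Finset.card_le_card hsub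
      rw [← rDiff_eq_card] at h1
      simp only [hD]
      exact_mod_cast h1
    -- Cauchy–Schwarz on the slice
    have hCS : (r s * (B.card : ℝ)) ^ 2 ≤ D s * E s := by
      rw [hsum]
      have hEs : E s = ∑ x ∈ diffSet (sliceA A s) B, ((rDiff (sliceA A s) B x : ℝ)) ^ 2 := by
        simp only [hE]
      calc (∑ x ∈ diffSet (sliceA A s) B, ((rDiff (sliceA A s) B x : ℝ))) ^ 2
          ≤ ((diffSet (sliceA A s) B).card : ℝ) * ∑ x ∈ diffSet (sliceA A s) B,
              ((rDiff (sliceA A s) B x : ℝ)) ^ 2 := sq_sum_le_card_mul_sum_sq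
        _ = ((diffSet (sliceA A s) B).card : ℝ) * E s := by rw [hEs]
        _ ≤ D s * E s := by
            exact mul_le_mul_of_nonneg_right hcard (hEnn s)
    have hle : r s * (B.card : ℝ) ≤ Real.sqrt (D s * E s) := by
      have h2 := Real.sqrt_le_sqrt hCS
      rwa [Real.sqrt_sq (by positivity)] at h2
    have hsplit : r s ^ ((3:ℝ)/2) = Real.sqrt (r s) * r s := by
      rw [show (3:ℝ)/2 = 1/2 + 1 by norm_num, Real.rpow_add hr0, Real.rpow_one,
        ← Real.sqrt_eq_rpow]
    calc r s ^ ((3:ℝ)/2) * (B.card : ℝ)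
        = Real.sqrt (r s) * (r s * (B.card : ℝ)) := by rw [hsplit]; ring
      _ ≤ Real.sqrt (r s) * Real.sqrt (D s * E s) := by
          exact mul_le_mul_of_nonneg_left hle (Real.sqrt_nonneg _)
      _ = Real.sqrt (r s * D s) * Real.sqrt (E s) := by
          rw [← Real.sqrt_mul (hrnn s), ← mul_assoc,
            Real.sqrt_mul (mul_nonneg (hrnn s) (hDnn s))]
  -- Sum up and apply Cauchy–Schwarz over s
  have key : energyK A ((3:ℝ)/2) * (B.card : ℝ)
      ≤ Real.sqrt (∑ s ∈ S, r s * D s) * Real.sqrt (∑ s ∈ S, E s) := by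
    calc energyK A ((3:ℝ)/2) * (B.card : ℝ)
        = ∑ s ∈ S, r s ^ ((3:ℝ)/2) * (B.card : ℝ) := by
          rw [energyK, ← Finset.sum_mul]
      _ ≤ ∑ s ∈ S, Real.sqrt (r s * D s) * Real.sqrt (E s) :=
          Finset.sum_le_sum hper
      _ ≤ Real.sqrt (∑ s ∈ S, r s * D s) * Real.sqrt (∑ s ∈ S, E s) :=
          Real.sum_sqrt_mul_sqrt_le S (fun s => mul_nonneg (hrnn s) (hDnn s)) hEnn
  -- identify Σ r·D with energy2 A C
  have hrD : ∑ s ∈ S, r s * D s = energy2 A C := by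
    rw [energy2]
    have h := quad_count A C
    simp only [hr, hD, hS]
    exact_mod_cast (congrArg (fun n : ℕ => (n : ℝ)) h).symm
  -- identify Σ E with Σ r² r_BB
  have hEsum : ∑ s ∈ S, E s = ∑ t ∈ S, (r t) ^ 2 * ((rDiff B B t : ℝ)) := by
    simp only [hE, hr, hS]
    exact_mod_cast congrArg (fun n : ℕ => (n : ℝ)) (sum_slice_energy A B)
  -- Hölder
  have hHold : ∑ t ∈ S, (r t) ^ 2 * ((rDiff B B t : ℝ))
      ≤ (energyK A 3) ^ ((2:ℝ)/3) * (energyK B 3) ^ ((1:ℝ)/3) := by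
    have hpq : Real.HolderConjugate ((3:ℝ)/2) 3 := Real.holderConjugate_iff.2 ⟨by norm_num, by norm_num⟩
    have hH := Real.inner_le_Lp_mul_Lq_of_nonneg (s := S)
      (f := fun t => (r t) ^ 2) (g := fun t => ((rDiff B B t : ℝ))) hpq
      (fun t _ => sq_nonneg _) (fun t _ => Nat.cast_nonneg _)
    have e1 : ∑ t ∈ S, ((r t) ^ 2) ^ ((3:ℝ)/2) = energyK A 3 := by
      rw [energyK]
      refine Finset.sum_congr rfl (fun t _ => ?_)
      rw [← Real.rpow_natCast (r t) 2, ← Real.rpow_mul (hrnn t)]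
      norm_num
      rfl
    have e2 : ∑ t ∈ S, ((rDiff B B t : ℝ)) ^ (3:ℝ) ≤ energyK B 3 := by
      rw [energyK]
      have hzero : ∀ t ∈ S, t ∉ S ∩ diffSet B B → ((rDiff B B t : ℝ)) ^ (3:ℝ) = 0 := by
        intro t htS htn
        have : t ∉ diffSet B B := fun h => htn (Finset.mem_inter.2 ⟨htS, h⟩)
        rw [rDiff_eq_zero this]
        simp [Real.zero_rpow]
      rw [← Finset.sum_subset (Finset.inter_subset_left) hzero]
      exact Finset.sum_le_sum_of_subset_of_nonneg (Finset.inter_subset_right)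
        (fun t _ _ => Real.rpow_nonneg (Nat.cast_nonneg _) _)
    have h13 : (1:ℝ) / ((3:ℝ)/2) = (2:ℝ)/3 := by norm_num
    rw [h13, e1] at hH
    refine hH.trans ?_
    have hA3 : (0:ℝ) ≤ energyK A 3 := by
      rw [energyK]; exact Finset.sum_nonneg fun s _ => Real.rpow_nonneg (Nat.cast_nonneg _) _
    refine mul_le_mul_of_nonneg_left ?_ (Real.rpow_nonneg hA3 _)
    exact Real.rpow_le_rpow (Finset.sum_nonneg fun t _ =>
      Real.rpow_nonneg (Nat.cast_nonneg _) _) e2 (by norm_num)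
  -- assemble
  have hEn2 : (0:ℝ) ≤ energy2 A C := by
    rw [energy2]; exact Finset.sum_nonneg fun s _ => sq_nonneg _
  set M : ℝ := (energyK A 3) ^ ((2:ℝ)/3) * (energyK B 3) ^ ((1:ℝ)/3) with hM
  have hMnn : 0 ≤ M := by
    apply mul_nonneg <;> exact Real.rpow_nonneg (by
      rw [energyK]; exact Finset.sum_nonneg fun s _ => Real.rpow_nonneg (Nat.cast_nonneg _) _) _
  have key2 : energyK A ((3:ℝ)/2) * (B.card : ℝ)
      ≤ Real.sqrt (energy2 A C) * Real.sqrt M := by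
    refine key.trans ?_
    rw [hrD]
    refine mul_le_mul_of_nonneg_left ?_ (Real.sqrt_nonneg _)
    exact Real.sqrt_le_sqrt (by rw [hEsum]; exact hHold)
  have hlhs : (0:ℝ) ≤ energyK A ((3:ℝ)/2) * (B.card : ℝ) := by
    apply mul_nonneg _ (Nat.cast_nonneg _)
    rw [energyK]; exact Finset.sum_nonneg fun s _ => Real.rpow_nonneg (Nat.cast_nonneg _) _
  have hsq := pow_le_pow_left₀ hlhs key2 2
  rw [mul_pow, mul_pow, Real.sq_sqrt hEn2, Real.sq_sqrt hMnn] at hsq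
  calc (energyK A ((3:ℝ)/2)) ^ 2 * (B.card : ℝ) ^ 2
      ≤ energy2 A C * M := hsq
    _ = (energyK A 3) ^ ((2:ℝ)/3) * (energyK B 3) ^ ((1:ℝ)/3) * energy2 A C := by
        rw [hM]; ring
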